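/- arXiv:1707.00830 — 2 statements merged into one kernel-verified Lean document; each statement's English description precedes it below -/
import Mathlib

section
/- Suppose a symmetric bilinear form S on a real inner product space satisfies S(Y, W + hW) = 2nk⟪Y, W+hW⟫ + 2(2n-2+μ)⟪hY, W+hW⟫ for all Y, W, where h is self-adjoint with h² = (k-1)φ², φ²X = -X + η(X)ξ, hξ = 0, η(X)=⟪X,ξ⟫, η(ξ)=1, and k ≠ 0. Then kS(Y,W) = 2nk²⟪Y,W⟫ + 2k(2n-2+μ)⟪hY,W⟫ - 2(k-1)(2n-2+μ)η(W)η(hY) for all Y, W. -/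
theorem stmt_7 {V : Type*} [NormedAddCommGroup V] [InnerProductSpace ℝ V]
    (ξ : V) (hξ : ‖ξ‖ = 1)
    (φ h : V →ₗ[ℝ] V)
    (hsym : ∀ x y : V, (inner ℝ (h x) y : ℝ) = inner ℝ x (h y))
    (hhξ : h ξ = 0) (hφξ : φ ξ = 0)
    (hφ2 : ∀ X : V, φ (φ X) = -X + (inner ℝ X ξ : ℝ) • ξ)
    (n : ℕ) (k μ : ℝ) (hk : k ≠ 0)
    (hh2 : ∀ X : V, h (h X) = (k - 1) • (-X + (inner ℝ X ξ : ℝ) • ξ))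
    (S : V →ₗ[ℝ] V →ₗ[ℝ] ℝ)
    (hSsym : ∀ X Y : V, S X Y = S Y X)
    (hyp : ∀ Y W : V, S Y (W + h W) =
      2 * n * k * (inner ℝ Y (W + h W) : ℝ)
        + 2 * (2 * n - 2 + μ) * (inner ℝ (h Y) (W + h W) : ℝ)) :
    ∀ Y W : V, k * S Y W =
      2 * n * k ^ 2 * (inner ℝ Y W : ℝ)
        + 2 * k * (2 * n - 2 + μ) * (inner ℝ (h Y) W : ℝ)
        - 2 * (k - 1) * (2 * n - 2 + μ) * (inner ℝ W ξ : ℝ) * (inner ℝ (h Y) ξ : ℝ) := by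
  intro Y W
  have hξξ : (inner ℝ ξ ξ : ℝ) = 1 := by
    rw [real_inner_self_eq_norm_mul_norm, hξ]; ring
  have hYξ : (inner ℝ (h Y) ξ : ℝ) = 0 := by rw [hsym, hhξ, inner_zero_right]
  have hhq : (inner ℝ Y (h W) : ℝ) = inner ℝ (h Y) W := (hsym Y W).symm
  have hs : (inner ℝ (h Y) (h W) : ℝ) = (k - 1) * (-(inner ℝ Y W) + inner ℝ Y ξ * inner ℝ W ξ) := by
    rw [hsym, hh2, real_inner_smul_right, inner_add_right, inner_neg_right,
      real_inner_smul_right]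
    ring_nf
  have e1 := hyp Y W
  have e2 := hyp Y (h W)
  have e3 := hyp Y ξ
  rw [hhξ, add_zero] at e3
  rw [hh2] at e2
  simp only [map_add, map_smul, map_neg, inner_add_right, inner_smul_right, inner_neg_right,
    smul_eq_mul, real_inner_smul_right] at e1 e2 e3
  rw [hYξ] at e2 e3
  rw [hhq] at e1 e2
  rw [hs] at e1 e2
  rw [hYξ]
  linear_combination e1 - e2 + (k - 1) * (inner ℝ W ξ : ℝ) * e3
end

section
/- Let V be a real inner product space with unit vector ξ, η(X)=⟪X,ξ⟫, and φ, h : V →ₗ[ℝ] V with φξ=0, hξ=0, hφ = -φh, h self-adjoint, φ²X = -X+η(X)ξ, and ⟪φX, φY⟫ = ⟪X,Y⟫ - η(X)η(Y). If a bilinear form S satisfies S(Y, φW + φhW) = 2nk⟪Y, φW + φhW⟫ for all Y, W, and S(φX,φY) = S(X,Y) - 2nkη(X)η(Y) - 2(2n-2+μ)⟪hX,Y⟫, then replacing Y by φY yields S(Y, W + hW) = 2nk⟪Y, W+hW⟫ + 2(2n-2+μ)⟪hY, W+hW⟫ for all Y, W. -/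
theorem stmt_14 {V : Type*} [NormedAddCommGroup V] [InnerProductSpace ℝ V]
    (ξ : V) (hξ : ‖ξ‖ = 1)
    (φ h : V →ₗ[ℝ] V)
    (hφξ : φ ξ = 0) (hhξ : h ξ = 0)
    (hanticomm : ∀ X : V, h (φ X) = -φ (h X))
    (hsym : ∀ x y : V, (inner ℝ (h x) y : ℝ) = inner ℝ x (h y))
    (hφ2 : ∀ X : V, φ (φ X) = -X + (inner ℝ X ξ : ℝ) • ξ)
    (hφg : ∀ X Y : V,
      (inner ℝ (φ X) (φ Y) : ℝ) = (inner ℝ X Y : ℝ) - (inner ℝ X ξ : ℝ) * (inner ℝ Y ξ : ℝ))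
    (S : V →ₗ[ℝ] V →ₗ[ℝ] ℝ)
    (n : ℕ) (k μ : ℝ)
    (hyp1 : ∀ Y W : V,
      S Y (φ W + φ (h W)) = 2 * n * k * (inner ℝ Y (φ W + φ (h W)) : ℝ))
    (hyp2 : ∀ X Y : V, S (φ X) (φ Y) =
      S X Y - 2 * n * k * (inner ℝ X ξ : ℝ) * (inner ℝ Y ξ : ℝ)
        - 2 * (2 * n - 2 + μ) * (inner ℝ (h X) Y : ℝ)) :
    ∀ Y W : V, S Y (W + h W) =
      2 * n * k * (inner ℝ Y (W + h W) : ℝ)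
        + 2 * (2 * n - 2 + μ) * (inner ℝ (h Y) (W + h W) : ℝ) := by
  intro Y W
  have h2 := hyp2 Y (W + h W)
  rw [map_add φ W (h W)] at h2
  rw [hyp1 (φ Y) W] at h2
  have key : (inner ℝ (φ Y) (φ W + φ (h W)) : ℝ)
      = (inner ℝ Y (W + h W) : ℝ) - (inner ℝ Y ξ : ℝ) * (inner ℝ (W + h W) ξ : ℝ) := by
    rw [← map_add]; exact hφg Y (W + h W)
  rw [key] at h2
  linarith
end
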